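/- Let M = A⊗A be the left A-module with action x·(a⊗b) := (x a)⊗b. The K-linear map ∇: A⊗A → A⊗(A⊗A) determined by ∇(a⊗b) = 1⊗(a⊗b) − a⊗(1⊗b) + a⊗(b⊗1) − (a b)⊗(1⊗1) is a flat connection on M with respect to the universal differential calculus, and the right A-action it induces is (a⊗b)·c = (a c)⊗b + (a(b c − c b))⊗1 for all a, b, c ∈ A. -/
import Mathlib


open TensorProduct

variable (K A M : Type*) [Field K] [Ring A] [Algebra K A]
  [AddCommGroup M] [Module K M] [Module A M] [IsScalarTower K A M]

/-- The action map `A ⊗ M → M`, `a ⊗ m ↦ a • m`. -/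
noncomputable def actMap : A ⊗[K] M →ₗ[K] M :=
  TensorProduct.lift (LinearMap.mk₂ K (fun a m => a • m)
    (fun a b m => add_smul a b m)
    (fun k a m => smul_assoc k a m)
    (fun a m n => smul_add a m n)
    (fun k a m => (smul_comm k a m).symm))

/-- Left multiplication by `a : A` on a left `A`-module, as a `K`-linear map. -/
def lsmulMap (a : A) : M →ₗ[K] M where
  toFun := fun m => a • m
  map_add' := fun x y => smul_add a x y
  map_smul' := fun k m => (smul_comm k a m).symm

/-- `a ↦ a • n` as a `K`-linear map `A → M`. -/
def smulBy (n : M) : A →ₗ[K] M where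
  toFun := fun a => a • n
  map_add' := fun a b => add_smul a b n
  map_smul' := fun k a => smul_assoc k a n

/-- `D : M → A ⊗ M` is a connection with respect to the universal differential
calculus. -/
def IsConnection (D : M →ₗ[K] A ⊗[K] M) : Prop :=
  (∀ m : M, actMap K A M (D m) = 0) ∧
  ∀ (a : A) (m : M),
    D (a • m) = LinearMap.rTensor M (LinearMap.mulLeft K a) (D m)
      + (1 : A) ⊗ₜ[K] (a • m) - a ⊗ₜ[K] m

/-- Flatness of a connection: `Σ 1 ⊗ m_A ⊗ m_M = Σ m_A ⊗ D(m_M)`. -/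
def IsFlatConnection (D : M →ₗ[K] A ⊗[K] M) : Prop :=
  ∀ m : M, (1 : A) ⊗ₜ[K] (D m) = LinearMap.lTensor A D (D m)

/-- The induced right operation `m·a := a m − Σ m_A a m_M`. -/
noncomputable def rop (D : M →ₗ[K] A ⊗[K] M) (m : M) (a : A) : M :=
  a • m - actMap K A M (LinearMap.rTensor M (LinearMap.mulRight K a) (D m))

/-- The map `A ⊗ A → A ⊗ (A ⊗ A)` given by
`a ⊗ b ↦ 1⊗(a⊗b) − a⊗(1⊗b) + a⊗(b⊗1) − (a b)⊗(1⊗1)`. -/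
noncomputable def nablaGrp : A ⊗[K] A →ₗ[K] A ⊗[K] (A ⊗[K] A) :=
  TensorProduct.lift (LinearMap.mk₂ K
    (fun a b => (1 : A) ⊗ₜ[K] (a ⊗ₜ[K] b) - a ⊗ₜ[K] ((1 : A) ⊗ₜ[K] b)
      + a ⊗ₜ[K] (b ⊗ₜ[K] (1 : A)) - (a * b) ⊗ₜ[K] ((1 : A) ⊗ₜ[K] (1 : A)))
    (fun a₁ a₂ b => by
      simp only [TensorProduct.add_tmul, TensorProduct.tmul_add, add_mul]
      abel)
    (fun k a b => by
      simp only [smul_mul_assoc, ← TensorProduct.smul_tmul', TensorProduct.tmul_smul,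
        smul_sub, smul_add])
    (fun a b₁ b₂ => by
      simp only [TensorProduct.add_tmul, TensorProduct.tmul_add, mul_add]
      abel)
    (fun k a b => by
      simp only [mul_smul_comm, ← TensorProduct.smul_tmul', TensorProduct.tmul_smul,
        smul_sub, smul_add]))

lemma nablaGrp_tmul (a b : A) :
    nablaGrp K A (a ⊗ₜ[K] b)
      = (1 : A) ⊗ₜ[K] (a ⊗ₜ[K] b) - a ⊗ₜ[K] ((1 : A) ⊗ₜ[K] b)
        + a ⊗ₜ[K] (b ⊗ₜ[K] (1 : A)) - (a * b) ⊗ₜ[K] ((1 : A) ⊗ₜ[K] (1 : A)) := rfl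

lemma actMap_tmul (a : A) (m : M) : actMap K A M (a ⊗ₜ[K] m) = a • m := rfl

lemma smul_tmul_AA (x a b : A) : x • (a ⊗ₜ[K] b) = (x * a) ⊗ₜ[K] b := rfl

/-- On the left `A`-module `M = A ⊗ A` (action on the first factor),
the map `a⊗b ↦ 1⊗(a⊗b) − a⊗(1⊗b) + a⊗(b⊗1) − (ab)⊗(1⊗1)` is a flat connection with
respect to the universal differential calculus, and the right `A`-action it induces is
`(a⊗b)·c = (a c)⊗b + (a(b c − c b))⊗1`. -/
theorem nablaGrp_flat_connection_and_induced_action :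
    IsConnection K A (A ⊗[K] A) (nablaGrp K A) ∧
    IsFlatConnection K A (A ⊗[K] A) (nablaGrp K A) ∧
    ∀ a b c : A,
      rop K A (A ⊗[K] A) (nablaGrp K A) (a ⊗ₜ[K] b) c
        = (a * c) ⊗ₜ[K] b + (a * (b * c - c * b)) ⊗ₜ[K] (1 : A) := by
  refine ⟨⟨fun m => ?_, fun x m => ?_⟩, fun m => ?_, fun a b c => ?_⟩
  · induction m using TensorProduct.induction_on with
    | zero => simp
    | tmul a b =>
        simp only [nablaGrp_tmul, map_sub, map_add, actMap_tmul, smul_tmul_AA,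
          one_mul, mul_one, smul_eq_mul]
        abel
    | add x y hx hy => rw [map_add, map_add, hx, hy, add_zero]
  · induction m using TensorProduct.induction_on with
    | zero => simp
    | tmul a b =>
        simp only [smul_tmul_AA, nablaGrp_tmul, map_sub, map_add,
          LinearMap.rTensor_tmul, LinearMap.mulLeft_apply, mul_one, mul_assoc,
          TensorProduct.tmul_sub, TensorProduct.tmul_add]
        abel
    | add x y hx hy =>
        simp only [smul_add, LinearMap.map_add, TensorProduct.tmul_add, hx, hy]
        abel
  · induction m using TensorProduct.induction_on with
    | zero =>
        rw [(nablaGrp K A).map_zero, (LinearMap.lTensor A (nablaGrp K A)).map_zero,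
          TensorProduct.tmul_zero]
    | tmul a b =>
        simp only [nablaGrp_tmul, map_sub, map_add, LinearMap.lTensor_tmul,
          TensorProduct.tmul_sub, TensorProduct.tmul_add, one_mul, mul_one]
        abel
    | add x y hx hy =>
        simp only [LinearMap.map_add, TensorProduct.tmul_add, hx, hy]
  · simp only [rop, nablaGrp_tmul, map_sub, map_add, LinearMap.rTensor_tmul,
      LinearMap.mulRight_apply, actMap_tmul, smul_tmul_AA, one_mul, mul_one,
      mul_sub, mul_add, sub_mul, add_mul, mul_assoc, TensorProduct.sub_tmul]
    abel
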